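/- If A ⊆ S is a J-set near zero, then for every m ∈ ℕ, every finite nonempty F ⊆ T_0 and every δ > 0 there exist a ∈ S∩(0,δ) and a finite nonempty H ⊆ ℕ with min H > m such that a + Σ_{t∈H} f(t) ∈ A for every f ∈ F. -/
import Mathlib


open Set Filter

attribute [local instance] Ultrafilter.add

/-- `S` is a subsemigroup of `((0,∞),+)` which is dense in `(0,∞)`
    (with the usual topology of `ℝ`). -/
def DenseSubsemigroupPos (S : Set ℝ) : Prop :=
  (∀ x ∈ S, 0 < x) ∧ (∀ x ∈ S, ∀ y ∈ S, x + y ∈ S) ∧ Ioi (0 : ℝ) ⊆ closure S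

/-- `0⁺(S)`: the ultrafilters (on `S`, viewed as ultrafilters on `ℝ` containing `S`)
    all of whose members meet every interval `(0,ε)`. -/
def zeroPlus (S : Set ℝ) : Set (Ultrafilter ℝ) :=
  {p | ∀ ε > (0 : ℝ), Ioo (0 : ℝ) ε ∩ S ∈ p}

/-- `L` is a left ideal of the subsemigroup `T` of `βS_d`. -/
def IsLeftIdealIn (T L : Set (Ultrafilter ℝ)) : Prop :=
  L.Nonempty ∧ L ⊆ T ∧ ∀ p ∈ T, ∀ q ∈ L, p + q ∈ L

/-- `L` is a minimal left ideal of the subsemigroup `T` of `βS_d`. -/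
def IsMinimalLeftIdealIn (T L : Set (Ultrafilter ℝ)) : Prop :=
  IsLeftIdealIn T L ∧ ∀ L', IsLeftIdealIn T L' → L' ⊆ L → L' = L

/-- `K(T)`: the smallest two sided ideal of `T`, i.e. the union of all
    minimal left ideals of `T`. -/
def smallestIdeal (T : Set (Ultrafilter ℝ)) : Set (Ultrafilter ℝ) :=
  ⋃₀ {L | IsMinimalLeftIdealIn T L}

/-- `A` is thick near zero (as a subset of `S`). -/
def ThickNearZero (S A : Set ℝ) : Prop :=
  ∃ ε > (0 : ℝ), ∀ F : Finset ℝ, F.Nonempty → ↑F ⊆ Ioo (0 : ℝ) ε ∩ S →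
    ∀ δ > (0 : ℝ), ∃ y ∈ Ioo (0 : ℝ) δ ∩ S, ∀ x ∈ F, x + y ∈ A

/-- `A` is syndetic near zero (as a subset of `S`). -/
def SyndeticNearZero (S A : Set ℝ) : Prop :=
  ∀ ε > (0 : ℝ), ∃ F : Finset ℝ, F.Nonempty ∧ ↑F ⊆ Ioo (0 : ℝ) ε ∩ S ∧
    ∃ δ > (0 : ℝ), ∀ x ∈ Ioo (0 : ℝ) δ ∩ S, ∃ t ∈ F, t + x ∈ A

/-- `A` is piecewise syndetic near zero (as a subset of `S`). -/
def PiecewiseSyndeticNearZero (S A : Set ℝ) : Prop :=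
  ∀ δ > (0 : ℝ), ∃ F : Finset ℝ, F.Nonempty ∧ ↑F ⊆ Ioo (0 : ℝ) δ ∩ S ∧
    ThickNearZero S {y | y ∈ S ∧ ∃ t ∈ F, t + y ∈ A}

/-- `T_0`: sequences in `S` with infimum `0`. -/
def T0 (S : Set ℝ) : Set (ℕ → ℝ) :=
  {f | (∀ n, f n ∈ S) ∧ IsGLB (range f) 0}

/-- `A` is a `J`-set near zero (as a subset of `S`). -/
def JSetNearZero (S A : Set ℝ) : Prop :=
  ∀ F : Finset (ℕ → ℝ), F.Nonempty → ↑F ⊆ T0 S → ∀ δ > (0 : ℝ),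
    ∃ a ∈ S ∩ Ioo (0 : ℝ) δ, ∃ H : Finset ℕ, H.Nonempty ∧
      ∀ f ∈ F, a + ∑ t ∈ H, f t ∈ A

/-- `J_0(S)`: the members of `0⁺(S)` all of whose members are `J`-sets near zero. -/
def J0 (S : Set ℝ) : Set (Ultrafilter ℝ) :=
  {p | p ∈ zeroPlus S ∧ ∀ A : Set ℝ, A ⊆ S → A ∈ p → JSetNearZero S A}

/-- `A` is central near zero: it belongs to some idempotent in `K(0⁺(S))`. -/
def CentralNearZero (S A : Set ℝ) : Prop :=
  ∃ p : Ultrafilter ℝ, p + p = p ∧ p ∈ smallestIdeal (zeroPlus S) ∧ A ∈ p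

/-- `A` is a `C`-set near zero (it satisfies the conclusion of the Central Sets
    Theorem near zero). -/
def CSetNearZero (S A : Set ℝ) : Prop :=
  ∀ δ ∈ Ioo (0 : ℝ) 1,
    ∃ (α : Finset (ℕ → ℝ) → ℝ) (H : Finset (ℕ → ℝ) → Finset ℕ),
      (∀ F : Finset (ℕ → ℝ), F.Nonempty → ↑F ⊆ T0 S →
        α F ∈ S ∧ α F < δ ∧ (H F).Nonempty) ∧
      (∀ F G : Finset (ℕ → ℝ), F.Nonempty → ↑F ⊆ T0 S → G.Nonempty → ↑G ⊆ T0 S →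
        F ⊂ G → ∀ i ∈ H F, ∀ j ∈ H G, i < j) ∧
      (∀ m : ℕ, ∀ G : Fin (m + 1) → Finset (ℕ → ℝ), ∀ f : Fin (m + 1) → ℕ → ℝ,
        (∀ i, (G i).Nonempty) → (∀ i, ↑(G i) ⊆ T0 S) →
        (∀ i j, i < j → G i ⊂ G j) → (∀ i, f i ∈ G i) →
        ∑ i, (α (G i) + ∑ t ∈ H (G i), f i t) ∈ A)

lemma shift_mem_T0 (S : Set ℝ) (hS : DenseSubsemigroupPos S) (f : ℕ → ℝ)
    (hf : f ∈ T0 S) (k : ℕ) : (fun n => f (n + k)) ∈ T0 S := by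
  refine ⟨fun n => hf.1 (n + k), ?_, ?_⟩
  · rintro x ⟨n, rfl⟩
    exact hf.2.1 ⟨n + k, rfl⟩
  · intro b hb
    rcases Nat.eq_zero_or_pos k with hk | hk
    · subst hk
      exact hf.2.2 (by rintro x ⟨n, rfl⟩; exact hb ⟨n, rfl⟩)
    · have hne : (Finset.range k).Nonempty := ⟨0, Finset.mem_range.mpr hk⟩
      set p := (Finset.range k).inf' hne f with hp
      have hc : min b p ≤ 0 := by
        apply hf.2.2
        rintro x ⟨n, rfl⟩
        by_cases hn : n < k
        · exact le_trans (min_le_right _ _)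
            (Finset.inf'_le _ (Finset.mem_range.mpr hn))
        · have : n = (n - k) + k := by omega
          rw [this]
          exact le_trans (min_le_left _ _) (hb ⟨n - k, rfl⟩)
      rcases min_le_iff.mp hc with h | h
      · exact h
      · exfalso
        obtain ⟨i, hi, hpi⟩ := Finset.exists_mem_eq_inf' hne f
        have : 0 < f i := (hS.1 _ (hf.1 i))
        rw [hp, hpi] at h; linarith

/-- in the definition of a `J`-set near zero one may moreover demand
    `min H > m`. -/
theorem jSetNearZero_min_gt (S : Set ℝ) (hS : DenseSubsemigroupPos S) (A : Set ℝ)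
    (hA : A ⊆ S) (hJ : JSetNearZero S A) (m : ℕ) (F : Finset (ℕ → ℝ))
    (hF : F.Nonempty) (hFT : ↑F ⊆ T0 S) (δ : ℝ) (hδ : 0 < δ) :
    ∃ a ∈ S ∩ Set.Ioo (0 : ℝ) δ, ∃ H : Finset ℕ, H.Nonempty ∧ (∀ t ∈ H, m < t) ∧
      ∀ f ∈ F, a + ∑ t ∈ H, f t ∈ A := by
  classical
  set G : Finset (ℕ → ℝ) := F.image (fun f => fun n => f (n + (m + 1))) with hG
  have hGne : G.Nonempty := hF.image _
  have hGT : ↑G ⊆ T0 S := by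
    intro g hg
    simp only [hG, Finset.coe_image, Set.mem_image] at hg
    obtain ⟨f, hf, rfl⟩ := hg
    exact shift_mem_T0 S hS f (hFT hf) (m + 1)
  obtain ⟨a, ha, H, hHne, hsum⟩ := hJ G hGne hGT δ hδ
  refine ⟨a, ha, H.image (· + (m + 1)), hHne.image _, ?_, ?_⟩
  · intro t ht
    simp only [Finset.mem_image] at ht
    obtain ⟨s, _, rfl⟩ := ht
    omega
  · intro f hf
    have hinj : ∀ x ∈ H, ∀ y ∈ H, x + (m + 1) = y + (m + 1) → x = y := by
      intro x _ y _ h; omega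
    rw [Finset.sum_image hinj]
    exact hsum _ (Finset.mem_image_of_mem _ hf)
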